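/- arXiv:1906.03571 — 2 statements merged into one kernel-verified Lean document; each statement's English description precedes it below -/
import Mathlib

section
/- Let 0 < k ≤ 1 and 0 ≤ β ≤ 1 be real numbers. Let e, e₁,…,e_{N-1} ≥ 0 satisfy e ≤ e₁ + ⋯ + e_{N-1}, and setting d_i = e_{i+1} + ⋯ + e_{N-1}, assume k·e_i ≥ d_i for all i = 1,…,N-2. Then, with h = ((1+k)^β - 1)/k^β, we have e^β ≤ e₁^β + h·e₂^β + h²·e₃^β + ⋯ + h^{N-2}·e_{N-1}^β. -/
lemma chord (k β : ℝ) (hk0 : 0 < k) (hβ0 : 0 ≤ β) (hβ1 : β ≤ 1)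
    (t : ℝ) (ht0 : 0 ≤ t) (htk : t ≤ k) :
    (1 + t) ^ β ≤ 1 + ((1 + k) ^ β - 1) / k ^ β * t ^ β := by
  rcases eq_or_lt_of_le hβ0 with hβ | hβ
  · simp [← hβ]
  set p : ℝ := 1 / β with hp_def
  have hβne : β ≠ 0 := ne_of_gt hβ
  have hp1 : 1 ≤ p := by
    rw [hp_def, le_div_iff₀ hβ]; linarith
  have hp0 : 0 < p := lt_of_lt_of_le one_pos hp1
  have hkne : (0:ℝ) ≤ k := le_of_lt hk0
  set l : ℝ := (t / k) ^ β with hl_def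
  have hl0 : 0 ≤ l := Real.rpow_nonneg (div_nonneg ht0 hkne) β
  have hl1 : l ≤ 1 := Real.rpow_le_one (div_nonneg ht0 hkne)
    ((div_le_one hk0).mpr htk) hβ0
  have hkβ : (0:ℝ) < k ^ β := Real.rpow_pos_of_pos hk0 β
  have hltk : l * k ^ β = t ^ β := by
    rw [hl_def, Real.div_rpow ht0 hkne, div_mul_cancel₀ _ (ne_of_gt hkβ)]
  have hpow_inv : ∀ x : ℝ, 0 ≤ x → (x ^ β) ^ p = x := by
    intro x hx
    rw [← Real.rpow_mul hx, hp_def, mul_one_div, div_self hβne, Real.rpow_one]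
  have hpow_inv' : ∀ x : ℝ, 0 ≤ x → (x ^ p) ^ β = x := by
    intro x hx
    rw [← Real.rpow_mul hx, hp_def, one_div, inv_mul_cancel₀ hβne, Real.rpow_one]
  have h1p : (1:ℝ) / p = β := by
    rw [hp_def, one_div_one_div]
  -- Minkowski on Fin 2
  have key := Real.Lp_add_le_of_nonneg (Finset.univ : Finset (Fin 2))
    (f := ![1 - l, 0]) (g := ![l, l * k ^ β]) hp1
    (by intro i _; fin_cases i <;> simp [hl1, sub_nonneg]  )
    (by intro i _; fin_cases i <;> simp [hl0] <;> positivity)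
  rw [Fin.sum_univ_two, Fin.sum_univ_two, Fin.sum_univ_two] at key
  simp only [Matrix.cons_val_zero, Matrix.cons_val_one, Matrix.head_cons] at key
  have e1 : ((1 - l + l) ^ p + (0 + l * k ^ β) ^ p) ^ (1/p) = (1 + t) ^ β := by
    rw [sub_add_cancel, zero_add, hltk, Real.one_rpow, hpow_inv t ht0, h1p]
  have e2 : ((1 - l) ^ p + 0 ^ p) ^ (1/p) = 1 - l := by
    rw [Real.zero_rpow (ne_of_gt hp0), add_zero, h1p, hpow_inv' _ (by linarith)]
  have e3 : (l ^ p + (l * k ^ β) ^ p) ^ (1/p) = l * (1 + k) ^ β := by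
    have : l ^ p = t / k := hpow_inv _ (div_nonneg ht0 hkne)
    rw [Real.mul_rpow hl0 (le_of_lt hkβ), this, hpow_inv k hkne, h1p]
    have h4 : t / k + t / k * k = t / k * (1 + k) := by ring
    rw [h4, Real.mul_rpow (div_nonneg ht0 hkne) (by linarith), hl_def]
  rw [e1, e2, e3] at key
  have hlk : l = t ^ β / k ^ β := by
    rw [hl_def, Real.div_rpow ht0 hkne]
  calc (1 + t) ^ β ≤ 1 - l + l * (1 + k) ^ β := key
    _ = 1 + ((1 + k) ^ β - 1) / k ^ β * t ^ β := by
        rw [hlk]; field_simp; ring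

lemma stepB (k β : ℝ) (hk0 : 0 < k) (hβ0 : 0 ≤ β) (hβ1 : β ≤ 1)
    (x y : ℝ) (hx : 0 ≤ x) (hy : 0 ≤ y) (hyx : y ≤ k * x) :
    (x + y) ^ β ≤ x ^ β + ((1 + k) ^ β - 1) / k ^ β * y ^ β := by
  rcases eq_or_lt_of_le hx with hx0 | hx0
  · have hy0 : y = 0 := le_antisymm (by rw [← hx0] at hyx; linarith) hy
    have hh0 : 0 ≤ ((1 + k) ^ β - 1) / k ^ β := by
      apply div_nonneg _ (Real.rpow_nonneg (le_of_lt hk0) β)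
      have h5 : (1:ℝ) ^ β ≤ (1 + k) ^ β :=
        Real.rpow_le_rpow zero_le_one (by linarith) hβ0
      rw [Real.one_rpow] at h5; linarith
    rw [← hx0, hy0, add_zero]
    nlinarith [Real.rpow_nonneg (le_refl (0:ℝ)) β]
  have ht0 : 0 ≤ y / x := div_nonneg hy (le_of_lt hx0)
  have htk : y / x ≤ k := (div_le_iff₀ hx0).mpr (by linarith)
  have h := chord k β hk0 hβ0 hβ1 (y / x) ht0 htk
  have hxβ : 0 < x ^ β := Real.rpow_pos_of_pos hx0 β
  have h2 := mul_le_mul_of_nonneg_left h (le_of_lt hxβ)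
  have e1 : x ^ β * (1 + y / x) ^ β = (x + y) ^ β := by
    rw [← Real.mul_rpow (le_of_lt hx0) (by positivity)]
    congr 1; field_simp
  have e2 : x ^ β * (y / x) ^ β = y ^ β := by
    rw [← Real.mul_rpow (le_of_lt hx0) ht0]
    congr 1; field_simp
  calc (x + y) ^ β = x ^ β * (1 + y / x) ^ β := e1.symm
    _ ≤ x ^ β * (1 + ((1 + k) ^ β - 1) / k ^ β * (y / x) ^ β) := h2
    _ = x ^ β + ((1 + k) ^ β - 1) / k ^ β * (x ^ β * (y / x) ^ β) := by ring
    _ = x ^ β + ((1 + k) ^ β - 1) / k ^ β * y ^ β := by rw [e2]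

lemma aux (k β : ℝ) (hk0 : 0 < k) (hk1 : k ≤ 1) (hβ0 : 0 ≤ β) (hβ1 : β ≤ 1) :
    ∀ n : ℕ, 1 ≤ n → ∀ e : ℝ, ∀ a : ℕ → ℝ, 0 ≤ e →
      (∀ i ∈ Finset.Icc 1 n, 0 ≤ a i) →
      e ≤ ∑ i ∈ Finset.Icc 1 n, a i →
      (∀ i, 1 ≤ i → i < n → k * a i ≥ ∑ j ∈ Finset.Icc (i + 1) n, a j) →
      e ^ β ≤ ∑ i ∈ Finset.Icc 1 n, (((1 + k) ^ β - 1) / k ^ β) ^ (i - 1) * a i ^ β := by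
  have hh0 : 0 ≤ ((1 + k) ^ β - 1) / k ^ β := by
    apply div_nonneg _ (Real.rpow_nonneg (le_of_lt hk0) β)
    have : (1:ℝ) ^ β ≤ (1 + k) ^ β :=
      Real.rpow_le_rpow zero_le_one (by linarith) hβ0
    rw [Real.one_rpow] at this; linarith
  intro n hn
  induction n, hn using Nat.le_induction with
  | base =>
    intro e a he ha hpoly _
    simp only [Finset.Icc_self, Finset.sum_singleton] at *
    simpa using Real.rpow_le_rpow he hpoly hβ0
  | succ n hn ih =>
    intro e a he ha hpoly hcond
    set h : ℝ := ((1 + k) ^ β - 1) / k ^ β with hh_def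
    have hins : Finset.Icc 1 (n + 1) = insert 1 (Finset.Icc 2 (n + 1)) := by
      ext i; simp [Finset.mem_Icc, Finset.mem_insert]; omega
    have hnotmem : (1 : ℕ) ∉ Finset.Icc 2 (n + 1) := by simp
    have hmap : ∀ (c d : ℕ) (f : ℕ → ℝ),
        ∑ j ∈ Finset.Icc (c + 1) (d + 1), f j = ∑ j ∈ Finset.Icc c d, f (j + 1) := by
      intro c d f
      rw [show Finset.Icc (c+1) (d+1) = (Finset.Icc c d).map
        (addRightEmbedding 1) by rw [Finset.map_add_right_Icc], Finset.sum_map]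
      rfl
    set S : ℝ := ∑ j ∈ Finset.Icc 2 (n + 1), a j with hS_def
    have hS0 : 0 ≤ S := Finset.sum_nonneg fun j hj => by
      apply ha; simp only [Finset.mem_Icc] at hj ⊢; omega
    have ha1 : 0 ≤ a 1 := ha 1 (by simp)
    have hSk : S ≤ k * a 1 := hcond 1 le_rfl (by omega)
    have hpoly' : e ≤ a 1 + S := by
      rw [hins, Finset.sum_insert hnotmem] at hpoly; exact hpoly
    -- IH for tail
    have ihS : S ^ β ≤ ∑ i ∈ Finset.Icc 1 n, h ^ (i - 1) * a (i + 1) ^ β := by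
      apply ih S (fun i => a (i + 1)) hS0
      · intro i hi; apply ha; simp only [Finset.mem_Icc] at hi ⊢; omega
      · exact le_of_eq (hmap 1 n a)
      · intro i hi1 hin
        have := hcond (i + 1) (by omega) (by omega)
        rw [hmap (i + 1) n a] at this
        exact this
    have hmul := mul_le_mul_of_nonneg_left ihS hh0
    rw [Finset.mul_sum] at hmul
    have htail : h * S ^ β ≤ ∑ j ∈ Finset.Icc 2 (n + 1), h ^ (j - 1) * a j ^ β := by
      rw [hmap 1 n (fun j => h ^ (j - 1) * a j ^ β)]
      refine le_trans hmul (le_of_eq (Finset.sum_congr rfl fun i hi => ?_))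
      simp only [Finset.mem_Icc] at hi
      rw [← mul_assoc, ← pow_succ']
      congr 2
      omega
    calc e ^ β ≤ (a 1 + S) ^ β :=
          Real.rpow_le_rpow he hpoly' hβ0
      _ ≤ a 1 ^ β + h * S ^ β := stepB k β hk0 hβ0 hβ1 (a 1) S ha1 hS0 hSk
      _ ≤ a 1 ^ β + ∑ j ∈ Finset.Icc 2 (n + 1), h ^ (j - 1) * a j ^ β := by linarith
      _ = ∑ i ∈ Finset.Icc 1 (n + 1), h ^ (i - 1) * a i ^ β := by
          rw [hins, Finset.sum_insert hnotmem]; simp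

theorem stmt_11 (k β : ℝ) (hk0 : 0 < k) (hk1 : k ≤ 1) (hβ0 : 0 ≤ β) (hβ1 : β ≤ 1)
    (N : ℕ) (hN : 2 ≤ N) (e : ℝ) (a : ℕ → ℝ)
    (he : 0 ≤ e) (ha : ∀ i ∈ Finset.Icc 1 (N - 1), 0 ≤ a i)
    (hpoly : e ≤ ∑ i ∈ Finset.Icc 1 (N - 1), a i)
    (hcond : ∀ i ∈ Finset.Icc 1 (N - 2),
      k * a i ≥ ∑ j ∈ Finset.Icc (i + 1) (N - 1), a j) :
    e ^ β ≤ ∑ i ∈ Finset.Icc 1 (N - 1),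
      (((1 + k) ^ β - 1) / k ^ β) ^ (i - 1) * (a i) ^ β := by
  apply aux k β hk0 hk1 hβ0 hβ1 (N - 1) (by omega) e a he ha hpoly
  intro i hi1 hin
  exact hcond i (by simp only [Finset.mem_Icc]; omega)
end

section
/- Let 0 < k ≤ 1 and β ≥ 2 be real numbers, and integers N ≥ 4, 1 ≤ m ≤ N-3. Let c, a₁,…,a_{N-1} ≥ 0 with c² ≥ a₁² + ⋯ + a_{N-1}², and setting c_i² = a_{i+1}² + ⋯ + a_{N-1}², assume k·a_i² ≥ c_i² for i = 1,…,m and a_j² ≤ k·c_j² for j = m+1,…,N-2. Then with h = ((1+k)^{β/2} - 1)/k^{β/2}: c^β ≥ a₁^β + h·a₂^β + ⋯ + h^{m-1}·a_m^β + h^{m+1}·(a_{m+1}^β + ⋯ + a_{N-2}^β) + h^m·a_{N-1}^β. -/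
open Finset

private lemma mono_diff {p w u : ℝ} (hp : 1 ≤ p) (hw : 0 < w) (hwu : w ≤ u) :
    (w + 1) ^ p - w ^ p ≤ (u + 1) ^ p - u ^ p := by
  rcases eq_or_lt_of_le hwu with rfl | hlt
  · exact le_rfl
  have hu : 0 < u := hw.trans hlt
  have hf := convexOn_rpow hp
  set f : ℝ → ℝ := fun x => x ^ p with hfdef
  have mem : ∀ z : ℝ, 0 ≤ z → z ∈ Set.Ici (0:ℝ) := fun z hz => hz
  have h1 : (f (w+1) - f w) / ((w+1) - w) ≤ (f (u+1) - f w) / ((u+1) - w) := by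
    apply hf.secant_mono (mem w hw.le) (mem (w+1) (by linarith)) (mem (u+1) (by linarith))
      (by intro h; linarith [h ▸ (rfl : w + 1 = w + 1)]) (by intro h; nlinarith [h]) (by linarith)
  have h2 : (f w - f (u+1)) / (w - (u+1)) ≤ (f u - f (u+1)) / (u - (u+1)) := by
    apply hf.secant_mono (mem (u+1) (by linarith)) (mem w hw.le) (mem u hu.le)
      (by intro h; nlinarith [h]) (by intro h; nlinarith [h]) hlt.le
  have e0 : (f (w+1) - f w) / ((w+1) - w) = f (w+1) - f w := by
    rw [show (w+1) - w = (1:ℝ) by ring, div_one]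
  have e1 : (f w - f (u+1)) / (w - (u+1)) = (f (u+1) - f w) / ((u+1) - w) := by
    rw [← neg_div_neg_eq]; congr 1 <;> ring
  have e2 : (f u - f (u+1)) / (u - (u+1)) = f (u+1) - f u := by
    rw [show u - (u+1) = -(1:ℝ) by ring, div_neg, div_one, neg_sub]
  rw [e0] at h1
  rw [e1, e2] at h2
  have := h1.trans h2
  simpa [hfdef] using this

private lemma core_ineq {p k t : ℝ} (hp : 1 ≤ p) (hk0 : 0 < k) (ht0 : 0 ≤ t) (htk : t ≤ k) :
    1 + ((1 + k) ^ p - 1) / k ^ p * t ^ p ≤ (1 + t) ^ p := by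
  rcases eq_or_lt_of_le ht0 with rfl | ht
  · rw [Real.zero_rpow (by linarith : p ≠ 0)]
    simp
  · have hkp : (0:ℝ) < k ^ p := Real.rpow_pos_of_pos hk0 p
    have htp : (0:ℝ) < t ^ p := Real.rpow_pos_of_pos ht p
    have hw : (0:ℝ) < 1 / k := by positivity
    have hwu : 1 / k ≤ 1 / t := one_div_le_one_div_of_le ht htk
    have key := mono_diff hp hw hwu
    have ek : (1 + k) ^ p - 1 = k ^ p * ((1/k + 1) ^ p - (1/k) ^ p) := by
      rw [mul_sub, ← Real.mul_rpow hk0.le (by positivity), ← Real.mul_rpow hk0.le hw.le,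
        show k * (1/k + 1) = 1 + k by field_simp, show k * (1/k) = 1 by field_simp,
        Real.one_rpow]
    have et : (1 + t) ^ p - 1 = t ^ p * ((1/t + 1) ^ p - (1/t) ^ p) := by
      rw [mul_sub, ← Real.mul_rpow ht.le (by positivity), ← Real.mul_rpow ht.le (by positivity),
        show t * (1/t + 1) = 1 + t by field_simp, show t * (1/t) = 1 by field_simp,
        Real.one_rpow]
    have hs : ((1 + k) ^ p - 1) * t ^ p ≤ ((1 + t) ^ p - 1) * k ^ p := by
      calc ((1 + k) ^ p - 1) * t ^ p
          = (k ^ p * t ^ p) * ((1/k + 1) ^ p - (1/k) ^ p) := by rw [ek]; ring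
        _ ≤ (k ^ p * t ^ p) * ((1/t + 1) ^ p - (1/t) ^ p) := by
            exact mul_le_mul_of_nonneg_left key (by positivity)
        _ = ((1 + t) ^ p - 1) * k ^ p := by rw [et]; ring
    have : ((1 + k) ^ p - 1) / k ^ p * t ^ p ≤ (1 + t) ^ p - 1 := by
      rw [div_mul_eq_mul_div, div_le_iff₀ hkp]
      exact hs
    linarith

private lemma sq_rpow_half {β : ℝ} {z : ℝ} (hz : 0 ≤ z) : (z ^ 2) ^ (β / 2) = z ^ β := by
  rw [← Real.rpow_natCast z 2, ← Real.rpow_mul hz, show ((2:ℕ):ℝ) * (β / 2) = β by push_cast; ring]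

private lemma step_main {k β x Y : ℝ} (hk0 : 0 < k) (hβ : 2 ≤ β)
    (hx : 0 ≤ x) (hY : 0 ≤ Y) (hxy : Y ≤ k * x ^ 2) :
    x ^ β + ((1 + k) ^ (β / 2) - 1) / k ^ (β / 2) * Y ^ (β / 2) ≤ (x ^ 2 + Y) ^ (β / 2) := by
  have hp : (1:ℝ) ≤ β / 2 := by linarith
  rcases eq_or_lt_of_le hx with rfl | hxpos
  · have hY0 : Y = 0 := le_antisymm (by simpa using hxy) hY
    subst hY0
    simp [Real.zero_rpow (by positivity : β ≠ 0), Real.zero_rpow (by positivity : β / 2 ≠ 0)]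
  · have hx2 : (0:ℝ) < x ^ 2 := by positivity
    set t := Y / x ^ 2 with htdef
    have ht0 : 0 ≤ t := by positivity
    have htk : t ≤ k := by rw [htdef, div_le_iff₀ hx2]; linarith
    have key := core_ineq hp hk0 ht0 htk
    have hfin := mul_le_mul_of_nonneg_left key
      (by positivity : (0:ℝ) ≤ (x ^ 2) ^ (β / 2))
    have A : (x ^ 2) ^ (β / 2) * (1 + t) ^ (β / 2) = (x ^ 2 + Y) ^ (β / 2) := by
      rw [← Real.mul_rpow hx2.le (by positivity)]
      congr 1
      rw [htdef]
      field_simp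
    have B : (x ^ 2) ^ (β / 2) * t ^ (β / 2) = Y ^ (β / 2) := by
      rw [← Real.mul_rpow hx2.le ht0]
      congr 1
      rw [htdef]
      field_simp
    rw [A, mul_add, mul_one, mul_left_comm, B, sq_rpow_half hx] at hfin
    exact hfin

private lemma step_main2 {k β x Y : ℝ} (hk0 : 0 < k) (hβ : 2 ≤ β)
    (hx : 0 ≤ x) (hY : 0 ≤ Y) (hxy : x ^ 2 ≤ k * Y) :
    Y ^ (β / 2) + ((1 + k) ^ (β / 2) - 1) / k ^ (β / 2) * x ^ β ≤ (x ^ 2 + Y) ^ (β / 2) := by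
  have h1 : Real.sqrt Y ^ 2 = Y := Real.sq_sqrt hY
  have h2 : Real.sqrt Y ^ β = Y ^ (β / 2) := by
    rw [← h1, sq_rpow_half (Real.sqrt_nonneg Y), h1]
  have := step_main (x := Real.sqrt Y) (Y := x ^ 2) hk0 hβ (Real.sqrt_nonneg Y)
    (by positivity) (by rw [h1]; exact hxy)
  rw [h1, h2, sq_rpow_half hx, add_comm Y (x ^ 2)] at this
  linarith [this]

theorem stmt_16 (k β : ℝ) (hk0 : 0 < k) (hk1 : k ≤ 1) (hβ : 2 ≤ β)
    (N m : ℕ) (hN : 4 ≤ N) (hm1 : 1 ≤ m) (hm2 : m ≤ N - 3)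
    (c : ℝ) (a : ℕ → ℝ)
    (hc : 0 ≤ c) (ha : ∀ i ∈ Finset.Icc 1 (N - 1), 0 ≤ a i)
    (hmono : c ^ 2 ≥ ∑ i ∈ Finset.Icc 1 (N - 1), (a i) ^ 2)
    (hcond1 : ∀ i ∈ Finset.Icc 1 m,
      k * (a i) ^ 2 ≥ ∑ j ∈ Finset.Icc (i + 1) (N - 1), (a j) ^ 2)
    (hcond2 : ∀ j ∈ Finset.Icc (m + 1) (N - 2),
      (a j) ^ 2 ≤ k * ∑ l ∈ Finset.Icc (j + 1) (N - 1), (a l) ^ 2) :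
    c ^ β ≥
      (∑ i ∈ Finset.Icc 1 m,
        (((1 + k) ^ (β / 2) - 1) / k ^ (β / 2)) ^ (i - 1) * (a i) ^ β)
      + (((1 + k) ^ (β / 2) - 1) / k ^ (β / 2)) ^ (m + 1) *
          (∑ j ∈ Finset.Icc (m + 1) (N - 2), (a j) ^ β)
      + (((1 + k) ^ (β / 2) - 1) / k ^ (β / 2)) ^ m * (a (N - 1)) ^ β := by
  set h : ℝ := ((1 + k) ^ (β / 2) - 1) / k ^ (β / 2) with hhdef
  set T : ℕ → ℝ := fun i => ∑ j ∈ Finset.Icc (i + 1) (N - 1), (a j) ^ 2 with hTdef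
  have hT0 : ∀ i, 0 ≤ T i := fun i => Finset.sum_nonneg fun j _ => sq_nonneg _
  have hh0 : 0 ≤ h := by
    apply div_nonneg _ (by positivity)
    have : (1:ℝ) ≤ (1 + k) ^ (β / 2) := Real.one_le_rpow (by linarith) (by linarith)
    linarith
  have hTsplit : ∀ i, i + 1 ≤ N - 1 → T i = a (i + 1) ^ 2 + T (i + 1) := by
    intro i hi
    rw [hTdef]
    simp only []
    rw [← Finset.insert_Icc_add_one_left_eq_Icc hi, Finset.sum_insert (by simp)]
  -- chain B
  have chainB : ∀ i, i ≤ m →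
      (∑ i' ∈ Finset.Icc 1 i, h ^ (i' - 1) * (a i') ^ β) + h ^ i * (T i) ^ (β / 2) ≤ c ^ β := by
    intro i
    induction i with
    | zero =>
      intro _
      have hbase : T 0 ≤ c ^ 2 := hmono
      have : (T 0) ^ (β / 2) ≤ (c ^ 2) ^ (β / 2) :=
        Real.rpow_le_rpow (hT0 0) hbase (by linarith)
      rw [sq_rpow_half hc] at this
      simpa using this
    | succ i ih =>
      intro hi
      have ih' := ih (by omega)
      have hmem : i + 1 ∈ Finset.Icc 1 m := by simp; omega
      have hcd := hcond1 (i + 1) hmem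
      have hai : 0 ≤ a (i + 1) := ha (i + 1) (by simp; omega)
      have hsp := hTsplit (i + 1 - 1 + 1 - 1) (by omega)
      have hsp' : T i = a (i + 1) ^ 2 + T (i + 1) := hTsplit i (by omega)
      have hstep : (a (i+1)) ^ β + h * (T (i+1)) ^ (β / 2) ≤ (T i) ^ (β / 2) := by
        rw [hsp']
        exact step_main hk0 hβ hai (hT0 (i+1)) (by exact hcd)
      have hkey : h ^ i * (a (i+1)) ^ β + h ^ i * (h * (T (i+1)) ^ (β / 2))
          ≤ h ^ i * (T i) ^ (β / 2) := by
        have := mul_le_mul_of_nonneg_left hstep (pow_nonneg hh0 i)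
        rw [mul_add] at this
        exact this
      have hsum : (∑ i' ∈ Finset.Icc 1 (i + 1), h ^ (i' - 1) * (a i') ^ β)
          = (∑ i' ∈ Finset.Icc 1 i, h ^ (i' - 1) * (a i') ^ β) + h ^ i * (a (i+1)) ^ β := by
        rw [Finset.sum_Icc_succ_top (by omega)]
        simp
      rw [hsum, pow_succ]
      calc (∑ i' ∈ Finset.Icc 1 i, h ^ (i' - 1) * (a i') ^ β) + h ^ i * (a (i+1)) ^ β
            + h ^ i * h * (T (i+1)) ^ (β / 2)
          ≤ (∑ i' ∈ Finset.Icc 1 i, h ^ (i' - 1) * (a i') ^ β) + h ^ i * (T i) ^ (β / 2) := by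
            have : h ^ i * h * (T (i+1)) ^ (β / 2) = h ^ i * (h * (T (i+1)) ^ (β / 2)) := by ring
            rw [this]; linarith
        _ ≤ c ^ β := ih'
  -- chain A (downward)
  have chainA : ∀ t, t ≤ N - 2 - m →
      h * (∑ j ∈ Finset.Icc (N - 1 - t) (N - 2), (a j) ^ β) + (a (N - 1)) ^ β
        ≤ (T (N - 2 - t)) ^ (β / 2) := by
    intro t
    induction t with
    | zero =>
      intro _
      have hemp : Finset.Icc (N - 1 - 0) (N - 2) = (∅ : Finset ℕ) :=
        Finset.Icc_eq_empty (by omega)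
      have hTtop : T (N - 2 - 0) = (a (N - 1)) ^ 2 := by
        rw [hTdef]
        simp only []
        rw [show N - 2 - 0 + 1 = N - 1 by omega, Finset.Icc_self, Finset.sum_singleton]
      have haN : 0 ≤ a (N - 1) := ha (N - 1) (by simp; omega)
      rw [hemp, hTtop, sq_rpow_half haN]
      simp
    | succ t ih =>
      intro ht
      have ih' := ih (by omega)
      set n := N - 2 - (t + 1) with hndef
      have e1 : N - 2 - t = n + 1 := by omega
      have e2 : N - 1 - t = n + 2 := by omega
      have e3 : N - 1 - (t + 1) = n + 1 := by omega
      rw [e1, e2] at ih'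
      rw [e3]
      have hmem : n + 1 ∈ Finset.Icc (m + 1) (N - 2) := by simp; omega
      have hcd := hcond2 (n + 1) hmem
      have hcd' : (a (n + 1)) ^ 2 ≤ k * T (n + 1) := hcd
      have hai : 0 ≤ a (n + 1) := ha (n + 1) (by simp; omega)
      have hsp : T n = a (n + 1) ^ 2 + T (n + 1) := hTsplit n (by omega)
      have hstep : (T (n+1)) ^ (β / 2) + h * (a (n+1)) ^ β ≤ (T n) ^ (β / 2) := by
        rw [hsp]
        exact step_main2 hk0 hβ hai (hT0 (n+1)) hcd'
      have hsum : (∑ j ∈ Finset.Icc (n + 1) (N - 2), (a j) ^ β)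
          = (a (n+1)) ^ β + ∑ j ∈ Finset.Icc (n + 2) (N - 2), (a j) ^ β := by
        rw [← Finset.insert_Icc_add_one_left_eq_Icc (by omega : n + 1 ≤ N - 2),
          Finset.sum_insert (by simp)]
        rfl
      rw [hsum, mul_add]
      linarith
  -- combine
  have hB := chainB m le_rfl
  have hA := chainA (N - 2 - m) le_rfl
  rw [show N - 1 - (N - 2 - m) = m + 1 by omega, show N - 2 - (N - 2 - m) = m by omega] at hA
  have hAm := mul_le_mul_of_nonneg_left hA (pow_nonneg hh0 m)
  rw [mul_add] at hAm
  have e : h ^ m * (h * ∑ j ∈ Finset.Icc (m + 1) (N - 2), (a j) ^ β)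
      = h ^ (m + 1) * ∑ j ∈ Finset.Icc (m + 1) (N - 2), (a j) ^ β := by
    rw [pow_succ]; ring
  rw [e] at hAm
  linarith
end
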